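/- Let A ⊆ B(G_μ) and B ⊆ B(G_ν) be von Neumann algebras with cyclic and separating unit vectors Λ_μ, Λ_ν defining faithful normal states μ, ν, let ω be a coupling of (A, μ) and (B, ν) with cyclic representation (H_ω, π_ω, Ω_ω), and let E_ω : A → B be the associated map. Define ω′ on B′ ⊙ A by ω′(b′ ⊗ a) := ω(a ⊗ b′). Then ω′ is a coupling of (B′, ν′) and (A′, μ′) (where μ′(a′) = ⟨Λ_μ, a′Λ_μ⟩ on A′, and the commutant of A′ is A), the map it determines satisfies E_{ω′} = E_ω′, the dual of E_ω, and moreover E_{ω′}(b′) = u_μ* ι_{H_μ}* π_ω(1 ⊗ b′) ι_{H_μ} u_μ for all b′ ∈ B′, where H_μ is the closure of π_ω(A ⊗ 1)Ω_ω, ι_{H_μ} : H_μ → H_ω is the inclusion, and u_μ : G_μ → H_μ is the unitary with u_μ aΛ_μ = π_ω(a ⊗ 1)Ω_ω for a ∈ A. -/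

import Mathlib

open scoped ComplexOrder

noncomputable section

noncomputable instance {H : Type} [NormedAddCommGroup H] [InnerProductSpace ℂ H]
    [CompleteSpace H] (A : VonNeumannAlgebra H) : Algebra ℂ ↥A :=
  inferInstanceAs (Algebra ℂ ↥A.toStarSubalgebra)

variable {Gμ Gν Hw : Type}
  [NormedAddCommGroup Gμ] [InnerProductSpace ℂ Gμ] [CompleteSpace Gμ]
  [NormedAddCommGroup Gν] [InnerProductSpace ℂ Gν] [CompleteSpace Gν]
  [NormedAddCommGroup Hw] [InnerProductSpace ℂ Hw] [CompleteSpace Hw]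

/-- A coupling of `(A, μ)` and `(B, ν)`: a state on the algebraic tensor product `A ⊙ B′`
(equivalently, a bilinear functional, positive on elements of the form `x* x`) whose
marginals are `μ` and `ν′`. -/
def IsCoupling {Gμ Gν : Type}
    [NormedAddCommGroup Gμ] [InnerProductSpace ℂ Gμ] [CompleteSpace Gμ]
    [NormedAddCommGroup Gν] [InnerProductSpace ℂ Gν] [CompleteSpace Gν]
    (A : VonNeumannAlgebra Gμ) (B : VonNeumannAlgebra Gν) (Λμ : Gμ) (Λν : Gν)
    (ω : ↥A →ₗ[ℂ] ↥B.commutant →ₗ[ℂ] ℂ) : Prop :=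
  (∀ (n : ℕ) (a : Fin n → ↥A) (b : Fin n → ↥B.commutant),
      0 ≤ ∑ i, ∑ j, ω (star (a i) * a j) (star (b i) * b j)) ∧
  (∀ a : ↥A, ω a 1 = inner ℂ Λμ ((a : Gμ →L[ℂ] Gμ) Λμ)) ∧
  (∀ b' : ↥B.commutant, ω 1 b' = inner ℂ Λν ((b' : Gν →L[ℂ] Gν) Λν))

set_option maxHeartbeats 1000000 in
/-- For a coupling `ω` of `(A, μ)` and `(B, ν)`, the functional
`ω′(b′ ⊗ a) := ω(a ⊗ b′)` on `B′ ⊙ A` is a coupling of `(B′, ν′)` and `(A′, μ′)` (the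
commutant of `A′` being `A`), its associated map is the dual `E_ω′` of `E_ω`, and
`E_{ω′}(b′) = u_μ* ι* π_ω(1 ⊗ b′) ι u_μ`. -/
theorem swapped_coupling_dual
    (A : VonNeumannAlgebra Gμ) (B : VonNeumannAlgebra Gν) (Λμ : Gμ) (Λν : Gν)
    (hΛμunit : ‖Λμ‖ = 1) (hΛνunit : ‖Λν‖ = 1)
    (hΛμcyc : Dense (Set.range fun a : ↥A => (a : Gμ →L[ℂ] Gμ) Λμ))
    (hΛμsep : ∀ a : ↥A, (a : Gμ →L[ℂ] Gμ) Λμ = 0 → a = 0)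
    (hΛνcyc : Dense (Set.range fun b : ↥B => (b : Gν →L[ℂ] Gν) Λν))
    (hΛνsep : ∀ b : ↥B, (b : Gν →L[ℂ] Gν) Λν = 0 → b = 0)
    (ω : ↥A →ₗ[ℂ] ↥B.commutant →ₗ[ℂ] ℂ) (hω : IsCoupling A B Λμ Λν ω)
    -- a cyclic representation of `(A ⊙ B′, ω)`
    (π₁ : ↥A →⋆ₐ[ℂ] (Hw →L[ℂ] Hw)) (π₂ : ↥B.commutant →⋆ₐ[ℂ] (Hw →L[ℂ] Hw)) (Ωw : Hw)
    (hcomm : ∀ (a : ↥A) (b' : ↥B.commutant), Commute (π₁ a) (π₂ b'))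
    (hcyc : Dense (Submodule.span ℂ
      (Set.range fun p : ↥A × ↥B.commutant => π₁ p.1 (π₂ p.2 Ωw)) : Set Hw))
    (hrep : ∀ (a : ↥A) (b' : ↥B.commutant), ω a b' = inner ℂ Ωw (π₁ a (π₂ b' Ωw)))
    -- the map `E_ω` associated to `ω`
    (E : ↥A → ↥B)
    (hE : ∀ (a : ↥A) (b' : ↥B.commutant),
      ω a b' = inner ℂ Λν ((E a : Gν →L[ℂ] Gν) ((b' : Gν →L[ℂ] Gν) Λν)))
    -- the swapped functional `ω′` on `B′ ⊙ A = B′ ⊙ (A′)′`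
    (ω' : ↥B.commutant →ₗ[ℂ] ↥A.commutant.commutant →ₗ[ℂ] ℂ)
    (hω' : ∀ (b' : ↥B.commutant) (x : ↥A.commutant.commutant) (a : ↥A),
      (x : Gμ →L[ℂ] Gμ) = (a : Gμ →L[ℂ] Gμ) → ω' b' x = ω a b')
    -- the unitary `u_μ : G_μ → H_μ ⊆ H_ω`
    (uμ : Gμ →L[ℂ] Hw) (huμiso : ∀ ξ : Gμ, ‖uμ ξ‖ = ‖ξ‖)
    (huμ : ∀ a : ↥A, uμ ((a : Gμ →L[ℂ] Gμ) Λμ) = π₁ a Ωw)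
    (huμrange : Set.range uμ = closure (Set.range fun a : ↥A => π₁ a Ωw)) :
    -- `ω′` is a coupling of `(B′, ν′)` and `(A′, μ′)` ...
    IsCoupling B.commutant A.commutant Λν Λμ ω' ∧
    -- ... whose associated map `E_{ω′}` is the dual of `E_ω` and is given by compression
    (∀ E' : ↥B.commutant → ↥A.commutant,
      (∀ (b' : ↥B.commutant) (x : ↥A.commutant.commutant),
        ω' b' x = inner ℂ Λμ ((E' b' : Gμ →L[ℂ] Gμ) ((x : Gμ →L[ℂ] Gμ) Λμ))) →
      (∀ (a : ↥A) (b' : ↥B.commutant),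
        (inner ℂ Λμ ((a : Gμ →L[ℂ] Gμ) ((E' b' : Gμ →L[ℂ] Gμ) Λμ)) : ℂ)
          = inner ℂ Λν ((E a : Gν →L[ℂ] Gν) ((b' : Gν →L[ℂ] Gν) Λν))) ∧
      (∀ b' : ↥B.commutant,
        (E' b' : Gμ →L[ℂ] Gμ)
          = (ContinuousLinearMap.adjoint uμ).comp ((π₂ b').comp uμ))) := by
  obtain ⟨hpos, hμ, hν⟩ := hω
  -- lift elements of the double commutant back to `A`
  have liftmem : ∀ x : ↥A.commutant.commutant, (x : Gμ →L[ℂ] Gμ) ∈ A := by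
    intro x
    exact (SetLike.ext_iff.mp A.commutant_commutant _).mp x.2
  set L : ↥A.commutant.commutant → ↥A := fun x => ⟨(x : Gμ →L[ℂ] Gμ), liftmem x⟩ with hLdef
  have hL : ∀ x, ((L x : ↥A) : Gμ →L[ℂ] Gμ) = (x : Gμ →L[ℂ] Gμ) := fun x => rfl
  have hω'' : ∀ (b' : ↥B.commutant) (x : ↥A.commutant.commutant),
      ω' b' x = ω (L x) b' := fun b' x => hω' b' x (L x) (hL x).symm
  constructor
  · refine ⟨?_, ?_, ?_⟩
    · intro n b x
      have hsum : ∀ i j : Fin n, ω' (star (b i) * b j) (star (x i) * x j)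
          = ω (star (L (x i)) * L (x j)) (star (b i) * b j) := by
        intro i j
        apply hω'
        push_cast
        rfl
      calc (0:ℂ) ≤ ∑ i, ∑ j, ω (star ((L ∘ x) i) * (L ∘ x) j) (star (b i) * b j) :=
            hpos n (L ∘ x) b
        _ = ∑ i, ∑ j, ω' (star (b i) * b j) (star (x i) * x j) := by
            refine Finset.sum_congr rfl fun i _ => Finset.sum_congr rfl fun j _ => ?_
            exact (hsum i j).symm
    · intro b'
      rw [hω' b' 1 1 (by push_cast; rfl)]
      exact hν b'
    · intro x
      rw [hω'' 1 x, hμ (L x)]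
  · intro E' hE'
    have hTcomm : ∀ (b' : ↥B.commutant) (a : ↥A),
        (a : Gμ →L[ℂ] Gμ) * (E' b' : Gμ →L[ℂ] Gμ)
          = (E' b' : Gμ →L[ℂ] Gμ) * (a : Gμ →L[ℂ] Gμ) := fun b' a =>
      VonNeumannAlgebra.mem_commutant_iff.mp (E' b').2 a a.2
    -- both the duality pairing and the compression reduce to `ω (star a₁ * a₂) b'`
    have memcc : ∀ a : ↥A, (a : Gμ →L[ℂ] Gμ) ∈ A.commutant.commutant := by
      intro a
      exact (SetLike.ext_iff.mp A.commutant_commutant _).mpr a.2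
    have keyL : ∀ (b' : ↥B.commutant) (a : ↥A),
        (inner ℂ Λμ ((E' b' : Gμ →L[ℂ] Gμ) ((a : Gμ →L[ℂ] Gμ) Λμ)) : ℂ) = ω a b' := by
      intro b' a
      set x : ↥A.commutant.commutant := ⟨(a : Gμ →L[ℂ] Gμ), memcc a⟩ with hx
      have h1 : ω' b' x = inner ℂ Λμ ((E' b' : Gμ →L[ℂ] Gμ) ((a : Gμ →L[ℂ] Gμ) Λμ)) :=
        hE' b' x
      have h2 : ω' b' x = ω a b' := hω' b' x a rfl
      rw [← h1, h2]
    constructor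
    · intro a b'
      calc (inner ℂ Λμ ((a : Gμ →L[ℂ] Gμ) ((E' b' : Gμ →L[ℂ] Gμ) Λμ)) : ℂ)
          = inner ℂ Λμ (((a : Gμ →L[ℂ] Gμ) * (E' b' : Gμ →L[ℂ] Gμ)) Λμ) := rfl
        _ = inner ℂ Λμ (((E' b' : Gμ →L[ℂ] Gμ) * (a : Gμ →L[ℂ] Gμ)) Λμ) := by
            rw [hTcomm]
        _ = inner ℂ Λμ ((E' b' : Gμ →L[ℂ] Gμ) ((a : Gμ →L[ℂ] Gμ) Λμ)) := rfl
        _ = ω a b' := keyL b' a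
        _ = _ := hE a b'
    · intro b'
      set T : Gμ →L[ℂ] Gμ := (E' b' : Gμ →L[ℂ] Gμ) with hT
      set S : Gμ →L[ℂ] Gμ :=
        (ContinuousLinearMap.adjoint uμ).comp ((π₂ b').comp uμ) with hS
      have key2 : ∀ a₁ a₂ : ↥A,
          (inner ℂ ((a₁ : Gμ →L[ℂ] Gμ) Λμ) (T ((a₂ : Gμ →L[ℂ] Gμ) Λμ)) : ℂ)
            = inner ℂ ((a₁ : Gμ →L[ℂ] Gμ) Λμ) (S ((a₂ : Gμ →L[ℂ] Gμ) Λμ)) := by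
        intro a₁ a₂
        have hadj : ContinuousLinearMap.adjoint (a₁ : Gμ →L[ℂ] Gμ)
            = ((star a₁ : ↥A) : Gμ →L[ℂ] Gμ) := by
          rw [← ContinuousLinearMap.star_eq_adjoint]; push_cast; rfl
        have hLHS : (inner ℂ ((a₁ : Gμ →L[ℂ] Gμ) Λμ) (T ((a₂ : Gμ →L[ℂ] Gμ) Λμ)) : ℂ)
            = ω (star a₁ * a₂) b' := by
          rw [← ContinuousLinearMap.adjoint_inner_right, hadj]
          have hc : ((star a₁ : ↥A) : Gμ →L[ℂ] Gμ) (T ((a₂ : Gμ →L[ℂ] Gμ) Λμ))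
              = T (((star a₁ * a₂ : ↥A) : Gμ →L[ℂ] Gμ) Λμ) := by
            have h := hTcomm b' (star a₁)
            calc ((star a₁ : ↥A) : Gμ →L[ℂ] Gμ) (T ((a₂ : Gμ →L[ℂ] Gμ) Λμ))
                = (((star a₁ : ↥A) : Gμ →L[ℂ] Gμ) * T) ((a₂ : Gμ →L[ℂ] Gμ) Λμ) := rfl
              _ = (T * ((star a₁ : ↥A) : Gμ →L[ℂ] Gμ)) ((a₂ : Gμ →L[ℂ] Gμ) Λμ) := by
                  rw [h]
              _ = T (((star a₁ : ↥A) : Gμ →L[ℂ] Gμ) ((a₂ : Gμ →L[ℂ] Gμ) Λμ)) := rfl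
              _ = T (((star a₁ * a₂ : ↥A) : Gμ →L[ℂ] Gμ) Λμ) := by push_cast; rfl
          rw [hc]
          exact keyL b' (star a₁ * a₂)
        have hRHS : (inner ℂ ((a₁ : Gμ →L[ℂ] Gμ) Λμ) (S ((a₂ : Gμ →L[ℂ] Gμ) Λμ)) : ℂ)
            = ω (star a₁ * a₂) b' := by
          have hSapp : S ((a₂ : Gμ →L[ℂ] Gμ) Λμ)
              = ContinuousLinearMap.adjoint uμ (π₂ b' (uμ ((a₂ : Gμ →L[ℂ] Gμ) Λμ))) := rfl
          rw [hSapp, ContinuousLinearMap.adjoint_inner_right, huμ a₁, huμ a₂]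
          have hc : π₂ b' (π₁ a₂ Ωw) = π₁ a₂ (π₂ b' Ωw) := by
            have := DFunLike.congr_fun (hcomm a₂ b') Ωw
            simpa using this.symm
          have hadjπ : ContinuousLinearMap.adjoint (π₁ (star a₁)) = π₁ a₁ := by
            rw [← ContinuousLinearMap.star_eq_adjoint, ← map_star, star_star]
          have hmul : π₁ (star a₁) (π₁ a₂ (π₂ b' Ωw)) = π₁ (star a₁ * a₂) (π₂ b' Ωw) := by
            rw [map_mul]; rfl
          rw [hc, ← hadjπ, ContinuousLinearMap.adjoint_inner_left, hmul]
          exact (hrep (star a₁ * a₂) b').symm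
        rw [hLHS, hRHS]
      have key3 : ∀ a₂ : ↥A, T ((a₂ : Gμ →L[ℂ] Gμ) Λμ) = S ((a₂ : Gμ →L[ℂ] Gμ) Λμ) := by
        intro a₂
        set v : Gμ := T ((a₂ : Gμ →L[ℂ] Gμ) Λμ) - S ((a₂ : Gμ →L[ℂ] Gμ) Λμ) with hv
        have hz : (fun ξ : Gμ => (inner ℂ ξ v : ℂ)) = fun _ => 0 := by
          refine Continuous.ext_on hΛμcyc (Continuous.inner continuous_id continuous_const)
            continuous_const ?_
          rintro _ ⟨a₁, rfl⟩
          simp only [hv, inner_sub_right, key2 a₁ a₂, sub_self]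
        have : (inner ℂ v v : ℂ) = 0 := congrFun hz v
        have : v = 0 := inner_self_eq_zero.mp this
        exact sub_eq_zero.mp this
      have : ∀ ξ : Gμ, T ξ = S ξ := by
        have heq := Continuous.ext_on hΛμcyc T.continuous S.continuous ?_
        · exact fun ξ => congrFun heq ξ
        · rintro _ ⟨a, rfl⟩
          exact key3 a
      exact ContinuousLinearMap.ext this
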